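/- Let X₁, X₂, Z be finite nonempty sets and let P₀ and P₁ be probability mass functions on X₁ × X₂ × Z such that: (i) P₀ and P₁ have the same marginal distribution on X₁ × Z; (ii) under P₁ the first and second coordinates are conditionally independent given the third coordinate; (iii) for every z ∈ Z of positive probability, the conditional distribution of the second coordinate given that the third coordinate equals z is the same under P₁ as under P₀. Then the Kullback–Leibler divergence between the marginal distributions of P₀ and P₁ on X₁ × X₂ is at most the conditional mutual information I_{P₀}(X₁; X₂ | Z) computed under P₀ (both in nats). (This is the discrete form of the paper's Lemma 1: if the attacker generates the induced channel estimate according to the conditional law of the legitimate channel given her observations, the PLA secure authentication rate, which equals the KL divergence between the two hypotheses' joint laws, is upper-bounded by I(x(1); x(2t+1) | z(2t)).) -/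

import Mathlib

open scoped BigOperators

/- Discrete Kullback–Leibler divergence (in nats) between two probability mass
functions on a finite type: the usual sum when `p` is absolutely continuous with
respect to `q`, and `+∞` otherwise. -/
open scoped Classical in
noncomputable def dKL {α : Type*} [Fintype α] (p q : α → ℝ) : EReal :=
  if ∀ x, q x = 0 → p x = 0 then
    (((∑ x, if p x = 0 then 0 else p x * Real.log (p x / q x)) : ℝ) : EReal)
  else ⊤

/- Conditional mutual information `I(X₁; X₂ | Z)` (in nats) of the first two
coordinates given the third, for a probability mass function on `X₁ × X₂ × Z`. -/
open scoped Classical in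
noncomputable def condMI {X₁ X₂ Z : Type*} [Fintype X₁] [Fintype X₂] [Fintype Z]
    (p : X₁ × X₂ × Z → ℝ) : ℝ :=
  ∑ z, ∑ x₁, ∑ x₂,
    if p (x₁, x₂, z) = 0 then 0
    else p (x₁, x₂, z) *
      Real.log (p (x₁, x₂, z) * (∑ a, ∑ b, p (a, b, z)) /
        ((∑ b, p (x₁, b, z)) * (∑ a, p (a, x₂, z))))

/- Lemma 1 (discrete form): if `P₀` and `P₁` have the same marginal on `X₁ × Z`,
the first two coordinates are conditionally independent given the third under `P₁`,
and the conditional law of the second coordinate given the third is the same under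
`P₀` and `P₁`, then the KL divergence between the `X₁ × X₂` marginals is at most the
conditional mutual information `I(X₁; X₂ | Z)` computed under `P₀`. -/

open scoped Classical in
lemma logsum_aux {ι : Type*} (s : Finset ι) (a b : ι → ℝ)
    (ha : ∀ i ∈ s, 0 ≤ a i) (hb : ∀ i ∈ s, 0 ≤ b i)
    (hab : ∀ i ∈ s, 0 < a i → 0 < b i) :
    (if (∑ i ∈ s, a i) = 0 then (0:ℝ)
      else (∑ i ∈ s, a i) * Real.log ((∑ i ∈ s, a i) / (∑ i ∈ s, b i)))
      ≤ ∑ i ∈ s, (if a i = 0 then (0:ℝ) else a i * Real.log (a i / b i)) := by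
  by_cases hA : (∑ i ∈ s, a i) = 0
  · rw [if_pos hA]
    have h0 : ∀ i ∈ s, a i = 0 := (Finset.sum_eq_zero_iff_of_nonneg ha).1 hA
    have : ∑ i ∈ s, (if a i = 0 then (0:ℝ) else a i * Real.log (a i / b i)) = 0 :=
      Finset.sum_eq_zero fun i hi => by rw [if_pos (h0 i hi)]
    rw [this]
  · rw [if_neg hA]
    set A := ∑ i ∈ s, a i with hA'
    set B := ∑ i ∈ s, b i with hB'
    have hApos : 0 < A := lt_of_le_of_ne (Finset.sum_nonneg ha) (Ne.symm hA)
    obtain ⟨i₀, hi₀, hai₀⟩ := Finset.exists_ne_zero_of_sum_ne_zero hA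
    have hbi₀ : 0 < b i₀ := hab i₀ hi₀ (lt_of_le_of_ne (ha i₀ hi₀) (Ne.symm hai₀))
    have hBpos : 0 < B :=
      lt_of_lt_of_le hbi₀ (Finset.single_le_sum hb hi₀)
    have key : ∀ i ∈ s, a i * Real.log (A / B) + a i - b i * (A / B)
        ≤ if a i = 0 then (0:ℝ) else a i * Real.log (a i / b i) := by
      intro i hi
      by_cases hai : a i = 0
      · rw [if_pos hai, hai]
        have : 0 ≤ b i * (A / B) := mul_nonneg (hb i hi) (by positivity)
        linarith
      · rw [if_neg hai]
        have haipos : 0 < a i := lt_of_le_of_ne (ha i hi) (Ne.symm hai)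
        have hbipos : 0 < b i := hab i hi haipos
        have h1 : Real.log (b i * A / (a i * B)) ≤ b i * A / (a i * B) - 1 :=
          Real.log_le_sub_one_of_pos (by positivity)
        have h2 : Real.log (a i / b i) = Real.log (A / B) - Real.log (b i * A / (a i * B)) := by
          rw [Real.log_div haipos.ne' hbipos.ne', Real.log_div hApos.ne' hBpos.ne',
            Real.log_div (by positivity) (by positivity),
            Real.log_mul hbipos.ne' hApos.ne', Real.log_mul haipos.ne' hBpos.ne']
          ring
        have h3 : a i * (b i * A / (a i * B)) = b i * (A / B) := by
          field_simp
        have h4 : a i * Real.log (b i * A / (a i * B)) ≤ a i * (b i * A / (a i * B)) - a i := by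
          nlinarith [mul_le_mul_of_nonneg_left h1 haipos.le]
        rw [h2, mul_sub]
        nlinarith
    calc A * Real.log (A / B)
        = ∑ i ∈ s, (a i * Real.log (A / B) + a i - b i * (A / B)) := by
          rw [Finset.sum_sub_distrib, Finset.sum_add_distrib, ← Finset.sum_mul,
            ← Finset.sum_mul, ← hA', ← hB']
          rw [mul_comm B (A / B), div_mul_cancel₀ A hBpos.ne']
          ring
      _ ≤ _ := Finset.sum_le_sum key

theorem stmt0 {X₁ X₂ Z : Type*} [Fintype X₁] [Fintype X₂] [Fintype Z]
    [Nonempty X₁] [Nonempty X₂] [Nonempty Z]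
    (P₀ P₁ : X₁ × X₂ × Z → ℝ)
    (h₀pos : ∀ w, 0 ≤ P₀ w) (h₀sum : ∑ w, P₀ w = 1)
    (h₁pos : ∀ w, 0 ≤ P₁ w) (h₁sum : ∑ w, P₁ w = 1)
    -- (i) same marginal on X₁ × Z
    (hmarg13 : ∀ x₁ z, ∑ x₂, P₀ (x₁, x₂, z) = ∑ x₂, P₁ (x₁, x₂, z))
    -- (ii) conditional independence of the first two coordinates given the third, under P₁
    (hci : ∀ x₁ x₂ z,
      P₁ (x₁, x₂, z) * (∑ a, ∑ b, P₁ (a, b, z)) =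
        (∑ b, P₁ (x₁, b, z)) * (∑ a, P₁ (a, x₂, z)))
    -- (iii) same conditional law of the second coordinate given the third, for z of
    -- positive probability
    (hcond2 : ∀ z, 0 < ∑ a, ∑ b, P₀ (a, b, z) → ∀ x₂,
      (∑ a, P₁ (a, x₂, z)) / (∑ a, ∑ b, P₁ (a, b, z)) =
        (∑ a, P₀ (a, x₂, z)) / (∑ a, ∑ b, P₀ (a, b, z))) :
    dKL (fun p : X₁ × X₂ => ∑ z, P₀ (p.1, p.2, z))
        (fun p : X₁ × X₂ => ∑ z, P₁ (p.1, p.2, z)) ≤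
      (condMI P₀ : EReal) := by
  classical
  have key : ∀ x₁ x₂ z, 0 < P₀ (x₁, x₂, z) →
      P₁ (x₁, x₂, z) =
        (∑ b, P₀ (x₁, b, z)) * (∑ a, P₀ (a, x₂, z)) / (∑ a, ∑ b, P₀ (a, b, z)) := by
    intro x₁ x₂ z hpos
    have hA0 : P₀ (x₁, x₂, z) ≤ ∑ b, P₀ (x₁, b, z) :=
      Finset.single_le_sum (f := fun b => P₀ (x₁, b, z)) (fun b _ => h₀pos _)
        (Finset.mem_univ x₂)
    have hS0 : (∑ b, P₀ (x₁, b, z)) ≤ ∑ a, ∑ b, P₀ (a, b, z) :=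
      Finset.single_le_sum (f := fun a => ∑ b, P₀ (a, b, z))
        (fun a _ => Finset.sum_nonneg fun b _ => h₀pos _) (Finset.mem_univ x₁)
    have hSpos : 0 < ∑ a, ∑ b, P₀ (a, b, z) := lt_of_lt_of_le (lt_of_lt_of_le hpos hA0) hS0
    have hSeq : (∑ a, ∑ b, P₁ (a, b, z)) = ∑ a, ∑ b, P₀ (a, b, z) :=
      Finset.sum_congr rfl fun a _ => (hmarg13 a z).symm
    have hB : (∑ a, P₁ (a, x₂, z)) = ∑ a, P₀ (a, x₂, z) := by
      have h := hcond2 z hSpos x₂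
      rw [hSeq] at h
      have := congrArg (fun t => t * (∑ a, ∑ b, P₀ (a, b, z))) h
      simpa [div_mul_cancel₀, hSpos.ne'] using this
    have h := hci x₁ x₂ z
    rw [hSeq, ← hmarg13 x₁ z, hB] at h
    rw [eq_div_iff hSpos.ne']
    exact h
  have keypos : ∀ x₁ x₂ z, 0 < P₀ (x₁, x₂, z) → 0 < P₁ (x₁, x₂, z) := by
    intro x₁ x₂ z hpos
    have hA0 : 0 < ∑ b, P₀ (x₁, b, z) :=
      lt_of_lt_of_le hpos (Finset.single_le_sum (f := fun b => P₀ (x₁, b, z))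
        (fun b _ => h₀pos _) (Finset.mem_univ x₂))
    have hB0 : 0 < ∑ a, P₀ (a, x₂, z) :=
      lt_of_lt_of_le hpos (Finset.single_le_sum (f := fun a => P₀ (a, x₂, z))
        (fun a _ => h₀pos _) (Finset.mem_univ x₁))
    have hS0 : 0 < ∑ a, ∑ b, P₀ (a, b, z) :=
      lt_of_lt_of_le hA0 (Finset.single_le_sum (f := fun a => ∑ b, P₀ (a, b, z))
        (fun a _ => Finset.sum_nonneg fun b _ => h₀pos _) (Finset.mem_univ x₁))
    rw [key x₁ x₂ z hpos]
    positivity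
  have hac : ∀ p : X₁ × X₂, (∑ z, P₁ (p.1, p.2, z)) = 0 → (∑ z, P₀ (p.1, p.2, z)) = 0 := by
    rintro ⟨x₁, x₂⟩ h
    by_contra h0
    have hpos : 0 < ∑ z, P₀ (x₁, x₂, z) :=
      lt_of_le_of_ne (Finset.sum_nonneg fun z _ => h₀pos _) (Ne.symm h0)
    obtain ⟨z, hz, hzne⟩ := Finset.exists_ne_zero_of_sum_ne_zero h0
    have hzpos : 0 < P₀ (x₁, x₂, z) := lt_of_le_of_ne (h₀pos _) (Ne.symm hzne)
    have : 0 < ∑ z, P₁ (x₁, x₂, z) :=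
      lt_of_lt_of_le (keypos x₁ x₂ z hzpos)
        (Finset.single_le_sum (f := fun z => P₁ (x₁, x₂, z)) (fun z _ => h₁pos _)
          (Finset.mem_univ z))
    exact this.ne' h
  rw [dKL, if_pos hac, EReal.coe_le_coe_iff]
  have hMI : condMI P₀ = ∑ x₁, ∑ x₂, ∑ z,
      (if P₀ (x₁, x₂, z) = 0 then (0:ℝ)
        else P₀ (x₁, x₂, z) *
          Real.log (P₀ (x₁, x₂, z) * (∑ a, ∑ b, P₀ (a, b, z)) /
            ((∑ b, P₀ (x₁, b, z)) * (∑ a, P₀ (a, x₂, z))))) := by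
    rw [condMI, Finset.sum_comm]
    exact Finset.sum_congr rfl fun x₁ _ => Finset.sum_comm
  rw [hMI, Fintype.sum_prod_type]
  refine Finset.sum_le_sum fun x₁ _ => Finset.sum_le_sum fun x₂ _ => ?_
  calc (if (∑ z, P₀ (x₁, x₂, z)) = 0 then (0:ℝ)
        else (∑ z, P₀ (x₁, x₂, z)) *
          Real.log ((∑ z, P₀ (x₁, x₂, z)) / (∑ z, P₁ (x₁, x₂, z))))
      ≤ ∑ z, (if P₀ (x₁, x₂, z) = 0 then (0:ℝ)
          else P₀ (x₁, x₂, z) * Real.log (P₀ (x₁, x₂, z) / P₁ (x₁, x₂, z))) :=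
        logsum_aux Finset.univ (fun z => P₀ (x₁, x₂, z)) (fun z => P₁ (x₁, x₂, z))
          (fun z _ => h₀pos _) (fun z _ => h₁pos _) (fun z _ h => keypos x₁ x₂ z h)
    _ = ∑ z, (if P₀ (x₁, x₂, z) = 0 then (0:ℝ)
          else P₀ (x₁, x₂, z) *
            Real.log (P₀ (x₁, x₂, z) * (∑ a, ∑ b, P₀ (a, b, z)) /
              ((∑ b, P₀ (x₁, b, z)) * (∑ a, P₀ (a, x₂, z))))) := by
        refine Finset.sum_congr rfl fun z _ => ?_
        by_cases h0 : P₀ (x₁, x₂, z) = 0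
        · rw [if_pos h0, if_pos h0]
        · rw [if_neg h0, if_neg h0]
          have hpos : 0 < P₀ (x₁, x₂, z) := lt_of_le_of_ne (h₀pos _) (Ne.symm h0)
          rw [key x₁ x₂ z hpos, div_div_eq_mul_div]
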